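/- Let A be an n×n complex matrix. There exists a unitary U such that U A U* is tridiagonal if and only if there exists a flag 0 = W₀ ⊂ W₁ ⊂ ... ⊂ Wₙ = ℂⁿ of subspaces with dim Wᵢ = i such that A Wᵢ ⊆ W_{i+1} and A* Wᵢ ⊆ W_{i+1} for all 0 ≤ i ≤ n−1. -/

import Mathlib

open Matrix

/-- A matrix is tridiagonal if all entries with |i-j| ≥ 2 vanish. -/
def IsTridiagonal {n : ℕ} (B : Matrix (Fin n) (Fin n) ℂ) : Prop :=
  ∀ i j : Fin n, 2 ≤ |(i : ℤ) - (j : ℤ)| → B i j = 0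

/-- A is unitarily tridiagonalisable. -/
def IsUnitarilyTridiagonalisable {n : ℕ} (A : Matrix (Fin n) (Fin n) ℂ) : Prop :=
  ∃ U ∈ Matrix.unitaryGroup (Fin n) ℂ, IsTridiagonal (U * A * Uᴴ)

namespace TridiagFlagAux

noncomputable section

variable {n : ℕ}

/-- The matrix whose `i`-th row is the conjugate of the vector `v i`. -/
def rowMat (v : Fin n → EuclideanSpace ℂ (Fin n)) : Matrix (Fin n) (Fin n) ℂ :=
  Matrix.of fun i k => star (v i k)

lemma toEuclideanLin_apply' (C : Matrix (Fin n) (Fin n) ℂ) (x : EuclideanSpace ℂ (Fin n))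
    (k : Fin n) : Matrix.toEuclideanLin C x k = ∑ l, C k l * x l := by
  rw [Matrix.toEuclideanLin_apply]; rfl

lemma rowMat_mul_conjTranspose (v : Fin n → EuclideanSpace ℂ (Fin n)) (i j : Fin n) :
    (rowMat v * (rowMat v)ᴴ) i j = inner ℂ (v i) (v j) := by
  simp [rowMat, Matrix.mul_apply, Matrix.conjTranspose_apply, PiLp.inner_apply,
    RCLike.inner_apply, mul_comm]

lemma rowMat_conj_entry (v : Fin n → EuclideanSpace ℂ (Fin n))
    (C : Matrix (Fin n) (Fin n) ℂ) (i j : Fin n) :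
    (rowMat v * C * (rowMat v)ᴴ) i j = inner ℂ (v i) (Matrix.toEuclideanLin C (v j)) := by
  simp only [PiLp.inner_apply, RCLike.inner_apply, toEuclideanLin_apply', Matrix.mul_apply,
    rowMat, Matrix.conjTranspose_apply, Matrix.of_apply, Finset.mul_sum, Finset.sum_mul]
  rw [Finset.sum_comm]
  refine Finset.sum_congr rfl fun k _ => Finset.sum_congr rfl fun l _ => ?_
  rw [star_star, ← RCLike.star_def, mul_assoc, mul_comm]

/-- The `j`-th column of `Uᴴ`, as an element of Euclidean space. -/
def colVec (U : Matrix (Fin n) (Fin n) ℂ) (j : Fin n) : EuclideanSpace ℂ (Fin n) :=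
  (WithLp.linearEquiv 2 ℂ (Fin n → ℂ)).symm fun k => star (U j k)

lemma inner_colVec (U : Matrix (Fin n) (Fin n) ℂ) (i j : Fin n) :
    (inner ℂ (colVec U i) (colVec U j) : ℂ) = (U * Uᴴ) i j := by
  simp [colVec, PiLp.inner_apply, RCLike.inner_apply, Matrix.mul_apply,
    Matrix.conjTranspose_apply, WithLp.linearEquiv, mul_comm]

lemma mulVec_colVec (U C : Matrix (Fin n) (Fin n) ℂ) (hU' : Uᴴ * U = 1) (j : Fin n) :
    Matrix.toEuclideanLin C (colVec U j) = ∑ k, ((U * C * Uᴴ) k j) • colVec U k := by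
  have key : C.mulVec (fun k => star (U j k)) =
      ∑ k, ((U * C * Uᴴ) k j) • (fun m => star (U k m)) := by
    have hw : (fun k => star (U j k)) = Uᴴ.mulVec (Pi.single j 1) := by
      funext k
      simp [Matrix.mulVec_single, Matrix.conjTranspose_apply]
    rw [hw, Matrix.mulVec_mulVec]
    have hCU : C * Uᴴ = Uᴴ * (U * C * Uᴴ) := by
      rw [show Uᴴ * (U * C * Uᴴ) = (Uᴴ * U) * (C * Uᴴ) by
        simp only [Matrix.mul_assoc], hU', one_mul]
    rw [hCU, ← Matrix.mulVec_mulVec]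
    have hB : (U * C * Uᴴ).mulVec (Pi.single j 1)
        = ∑ k, ((U * C * Uᴴ) k j) • (Pi.single k (1:ℂ) : Fin n → ℂ) := by
      funext m
      simp [Matrix.mulVec_single, Finset.sum_apply, Pi.single_apply]
    rw [hB]
    rw [show Uᴴ.mulVec (∑ k, ((U * C * Uᴴ) k j) • (Pi.single k (1:ℂ) : Fin n → ℂ))
        = ∑ k, ((U * C * Uᴴ) k j) • Uᴴ.mulVec (Pi.single k 1) by
      rw [← Matrix.mulVecLin_apply, map_sum]
      simp [Matrix.mulVecLin_apply, Matrix.mulVec_smul]]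
    refine Finset.sum_congr rfl fun k _ => ?_
    congr 1
    funext m
    simp [Matrix.mulVec_single, Matrix.conjTranspose_apply]
  have h1 : Matrix.toEuclideanLin C (colVec U j) =
      (WithLp.linearEquiv 2 ℂ (Fin n → ℂ)).symm (C.mulVec fun k => star (U j k)) := by
    rw [Matrix.toEuclideanLin_apply]; rfl
  rw [h1, key, map_sum]
  refine Finset.sum_congr rfl fun k _ => ?_
  rw [_root_.map_smul]
  rfl

/-- The flag spanned by the first `i` vectors of `v`. -/
def flagW (v : Fin n → EuclideanSpace ℂ (Fin n)) (i : Fin (n + 1)) :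
    Submodule ℂ (EuclideanSpace ℂ (Fin n)) :=
  Submodule.span ℂ (Set.range fun j : Fin (i : ℕ) => v (Fin.castLE i.is_le j))

lemma mem_flagW (v : Fin n → EuclideanSpace ℂ (Fin n)) {i : Fin (n + 1)} {j : Fin n}
    (h : (j : ℕ) < (i : ℕ)) : v j ∈ flagW v i := by
  refine Submodule.subset_span ⟨⟨(j : ℕ), h⟩, ?_⟩
  congr 1

lemma flagW_mono (v : Fin n → EuclideanSpace ℂ (Fin n)) : Monotone (flagW v) := by
  intro i i' h
  refine Submodule.span_mono ?_
  rintro x ⟨j, rfl⟩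
  exact ⟨⟨(j : ℕ), lt_of_lt_of_le j.2 h⟩, rfl⟩

end

end TridiagFlagAux

theorem unitary_tridiagonalisable_iff_flag {n : ℕ} (A : Matrix (Fin n) (Fin n) ℂ) :
    IsUnitarilyTridiagonalisable A ↔
      ∃ W : Fin (n + 1) → Submodule ℂ (EuclideanSpace ℂ (Fin n)),
        Monotone W ∧ W 0 = ⊥ ∧ W (Fin.last n) = ⊤ ∧
        (∀ i : Fin (n + 1), Module.finrank ℂ (W i) = (i : ℕ)) ∧
        (∀ i : Fin n, (W i.castSucc).map (Matrix.toEuclideanLin A) ≤ W i.succ) ∧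
        (∀ i : Fin n, (W i.castSucc).map (Matrix.toEuclideanLin Aᴴ) ≤ W i.succ) := by
  classical
  constructor
  · rintro ⟨U, hU, htri⟩
    have hU1 : U * Uᴴ = 1 := by
      have := Matrix.mem_unitaryGroup_iff.mp hU
      rwa [Matrix.star_eq_conjTranspose] at this
    have hU2 : Uᴴ * U = 1 := by
      have := Matrix.mem_unitaryGroup_iff'.mp hU
      rwa [Matrix.star_eq_conjTranspose] at this
    set v : Fin n → EuclideanSpace ℂ (Fin n) := TridiagFlagAux.colVec U with hv
    have horth : Orthonormal ℂ v := by
      rw [orthonormal_iff_ite]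
      intro i j
      rw [hv, TridiagFlagAux.inner_colVec, hU1, Matrix.one_apply]
    have hmap : ∀ C : Matrix (Fin n) (Fin n) ℂ, IsTridiagonal (U * C * Uᴴ) →
        ∀ i : Fin n, (TridiagFlagAux.flagW v i.castSucc).map (Matrix.toEuclideanLin C) ≤
          TridiagFlagAux.flagW v i.succ := by
      intro C htriC i
      rw [TridiagFlagAux.flagW, Submodule.map_span_le]
      rintro x ⟨j, rfl⟩
      have hj : ((Fin.castLE (i.castSucc).is_le j : Fin n) : ℕ) < (i : ℕ) := by
        simpa using j.2
      rw [hv, TridiagFlagAux.mulVec_colVec U C hU2, ← hv]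
      refine Submodule.sum_mem _ fun k _ => ?_
      by_cases hk : (U * C * Uᴴ) k (Fin.castLE (i.castSucc).is_le j) = 0
      · rw [hk, zero_smul]; exact Submodule.zero_mem _
      · refine Submodule.smul_mem _ _ (TridiagFlagAux.mem_flagW v ?_)
        have h2 : ¬(2 ≤ |(k : ℤ) - ((Fin.castLE (i.castSucc).is_le j : Fin n) : ℤ)|) :=
          fun h => hk (htriC _ _ h)
        rw [not_le, abs_lt] at h2
        simp only [Fin.val_succ]
        omega
    refine ⟨TridiagFlagAux.flagW v, TridiagFlagAux.flagW_mono v, ?_, ?_, ?_, hmap A htri, ?_⟩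
    · rw [eq_bot_iff, TridiagFlagAux.flagW, Submodule.span_le]
      rintro x ⟨j, rfl⟩
      exact absurd j.2 (by simp)
    · have hr : Set.range (fun j : Fin ((Fin.last n : Fin (n+1)) : ℕ) =>
          v (Fin.castLE (Fin.last n).is_le j)) = Set.range v := by
        apply Set.Subset.antisymm
        · rintro x ⟨j, rfl⟩; exact ⟨_, rfl⟩
        · rintro x ⟨j, rfl⟩
          exact ⟨⟨(j : ℕ), by simpa using j.2⟩, rfl⟩
      rw [TridiagFlagAux.flagW, hr]
      exact horth.linearIndependent.span_eq_top_of_card_eq_finrank'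
        (by simp [finrank_euclideanSpace_fin])
    · intro i
      have hli : LinearIndependent ℂ (v ∘ Fin.castLE i.is_le) :=
        horth.linearIndependent.comp _ (Fin.castLE_injective _)
      exact (finrank_span_eq_card hli).trans (by simp)
    · refine hmap Aᴴ ?_
      intro i j h
      have hAH : U * Aᴴ * Uᴴ = (U * A * Uᴴ)ᴴ := by
        simp [Matrix.conjTranspose_mul, Matrix.mul_assoc]
      rw [hAH, Matrix.conjTranspose_apply, htri j i (by rwa [abs_sub_comm] at h), star_zero]
  · rintro ⟨W, hmono, h0, htop, hrank, hA, hA'⟩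
    have hle : ∀ i : Fin n, W i.castSucc ≤ W i.succ := fun i => hmono (Fin.castSucc_le_succ i)
    have hex : ∀ i : Fin n, ∃ x, x ∈ (W i.castSucc)ᗮ ⊓ W i.succ ∧ ‖x‖ = 1 := by
      intro i
      have hdim : Module.finrank ℂ ((W i.castSucc)ᗮ ⊓ W i.succ : Submodule ℂ _) = 1 :=
        Submodule.finrank_add_inf_finrank_orthogonal' (hle i)
          (by rw [hrank, hrank, Fin.coe_castSucc, Fin.val_succ])
      obtain ⟨w, hw, hw0⟩ := Submodule.exists_mem_ne_zero_of_ne_bot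
        (p := (W i.castSucc)ᗮ ⊓ W i.succ) (by
          intro hbot
          rw [hbot, finrank_bot] at hdim
          exact one_ne_zero hdim.symm)
      refine ⟨(‖w‖ : ℂ)⁻¹ • w, Submodule.smul_mem _ _ hw, ?_⟩
      rw [norm_smul, norm_inv, Complex.norm_real, norm_norm,
        inv_mul_cancel₀ (norm_ne_zero_iff.mpr hw0)]
    choose v hv hvnorm using hex
    have hv1 : ∀ i, v i ∈ (W i.castSucc)ᗮ := fun i => (Submodule.mem_inf.mp (hv i)).1
    have hv2 : ∀ i, v i ∈ W i.succ := fun i => (Submodule.mem_inf.mp (hv i)).2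
    have hmem : ∀ (C : Matrix (Fin n) (Fin n) ℂ),
        (∀ i : Fin n, (W i.castSucc).map (Matrix.toEuclideanLin C) ≤ W i.succ) →
        ∀ {i j : Fin n}, (j : ℕ) + 2 ≤ (i : ℕ) →
          Matrix.toEuclideanLin C (v j) ∈ W i.castSucc := by
      intro C hC i j h
      have hin := i.isLt
      have hjn : (j : ℕ) + 1 < n := by omega
      have h1 : v j ∈ W (⟨(j : ℕ) + 1, hjn⟩ : Fin n).castSucc := by
        have he : j.succ = (⟨(j : ℕ) + 1, hjn⟩ : Fin n).castSucc := by
          apply Fin.ext; simp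
        rw [← he]; exact hv2 j
      have h2 : Matrix.toEuclideanLin C (v j) ∈ W (⟨(j : ℕ) + 1, hjn⟩ : Fin n).succ :=
        hC _ ⟨v j, h1, rfl⟩
      refine hmono ?_ h2
      rw [Fin.le_def]
      simp only [Fin.val_succ, Fin.coe_castSucc]
      omega
    refine ⟨TridiagFlagAux.rowMat v, ?_, ?_⟩
    · rw [Matrix.mem_unitaryGroup_iff, Matrix.star_eq_conjTranspose]
      ext i j
      rw [TridiagFlagAux.rowMat_mul_conjTranspose, Matrix.one_apply]
      rcases eq_or_ne i j with rfl | hne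
      · rw [if_pos rfl, inner_self_eq_norm_sq_to_K, hvnorm]
        norm_num
      · rw [if_neg hne]
        have key : ∀ p q : Fin n, (p : ℕ) < (q : ℕ) → (inner ℂ (v q) (v p) : ℂ) = 0 := by
          intro p q hpq
          have h1 : v p ∈ W q.castSucc := by
            refine hmono ?_ (hv2 p)
            rw [Fin.le_def]
            simp only [Fin.val_succ, Fin.coe_castSucc]
            omega
          exact (Submodule.mem_orthogonal' _ _).mp (hv1 q) (v p) h1
        have hne' : (i : ℕ) ≠ (j : ℕ) := fun hh => hne (Fin.ext hh)
        rcases Nat.lt_or_ge (i : ℕ) (j : ℕ) with h | h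
        · rw [← inner_conj_symm, key i j h, map_zero]
        · exact key j i (by omega)
    · intro i j habs
      rw [TridiagFlagAux.rowMat_conj_entry]
      have hcase : (j : ℕ) + 2 ≤ (i : ℕ) ∨ (i : ℕ) + 2 ≤ (j : ℕ) := by
        rcases abs_cases ((i : ℤ) - (j : ℤ)) with ⟨he, _⟩ | ⟨he, _⟩ <;>
          rw [he] at habs <;> omega
      rcases hcase with h | h
      · exact (Submodule.mem_orthogonal' _ _).mp (hv1 i) _ (hmem A hA h)
      · have hadj : Matrix.toEuclideanLin A = LinearMap.adjoint (Matrix.toEuclideanLin Aᴴ) := by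
          conv_lhs => rw [← Matrix.conjTranspose_conjTranspose A]
          exact Matrix.toEuclideanLin_conjTranspose_eq_adjoint Aᴴ
        rw [hadj, LinearMap.adjoint_inner_right]
        exact (Submodule.mem_orthogonal _ _).mp (hv1 j) _ (hmem Aᴴ hA' h)
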